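/- The structure-constant matrix of the 7-dimensional Lie algebra d_5', regarded over the rational function field ℂ(x_0,x_1,x_2,x_3,y_1), has generic rank 6; hence N(d_5') = 7 − 6 = 1. -/

import Mathlib

set_option maxHeartbeats 2000000
set_option maxRecDepth 8000
set_option synthInstance.maxHeartbeats 400000

open MvPolynomial Matrix
open Fin.NatCast

/-- Entry polynomials (listed direction) of the structure-constant matrix of the
7-dimensional algebra `d_5'` over `ℂ[x_0, x_1, x_2, x_3, y_1]` (variables indexed
by `Fin 5`: `x_i ↦ i`, `y_1 ↦ 4`).  Basis: `X_0,…,X_3 ↦ 0,…,3`, `Y_1 ↦ 4`,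
`V_1 ↦ 5`, `V_2 ↦ 6`. -/
noncomputable def strD5P (i j : ℕ) : MvPolynomial (Fin 5) ℂ :=
  (if i = 0 ∧ (j = 1 ∨ j = 2) then X ((j : Fin 5) + 1) else 0) +
  (if i = 1 ∧ j = 2 then X 4 else 0) +
  (if i = 5 ∧ j ≤ 3 then C ((j + 1 : ℕ) : ℂ) * X (j : Fin 5) else 0) +
  (if i = 5 ∧ j = 4 then (5 : MvPolynomial (Fin 5) ℂ) * X 4 else 0) +
  (if i = 6 ∧ 1 ≤ j ∧ j ≤ 3 then X (j : Fin 5) else 0) +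
  (if i = 6 ∧ j = 4 then (2 : MvPolynomial (Fin 5) ℂ) * X 4 else 0)

/-- The antisymmetric 7×7 structure-constant matrix of `d_5'` over the rational
function field `ℂ(x_0, x_1, x_2, x_3, y_1)`. -/
noncomputable def AD5 :
    Matrix (Fin 7) (Fin 7) (FractionRing (MvPolynomial (Fin 5) ℂ)) :=
  fun i j =>
    algebraMap (MvPolynomial (Fin 5) ℂ) _ (strD5P i.1 j.1 - strD5P j.1 i.1)

/-- The polynomial structure-constant matrix. -/
noncomputable def P7 : Matrix (Fin 7) (Fin 7) (MvPolynomial (Fin 5) ℂ) :=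
  fun i j => strD5P i.1 j.1 - strD5P j.1 i.1

/-- Row/column selection. -/
def selIdx : Fin 6 → Fin 7 := ![0, 1, 2, 4, 5, 6]

lemma eval_strD5P (i j : ℕ) : eval (fun _ => (1 : ℂ)) (strD5P i j) =
    (if i = 0 ∧ (j = 1 ∨ j = 2) then 1 else 0) +
    (if i = 1 ∧ j = 2 then 1 else 0) +
    (if i = 5 ∧ j ≤ 3 then ((j + 1 : ℕ) : ℂ) else 0) +
    (if i = 5 ∧ j = 4 then 5 else 0) +
    (if i = 6 ∧ 1 ≤ j ∧ j ≤ 3 then 1 else 0) +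
    (if i = 6 ∧ j = 4 then 2 else 0) := by
  simp only [strD5P, _root_.map_add, apply_ite (eval fun _ => (1 : ℂ)), _root_.map_zero,
    _root_.map_mul, eval_C, eval_X, _root_.map_ofNat]
  norm_num

lemma d5_eval_det_ne_zero :
    ((P7.submatrix selIdx selIdx).map (eval fun _ => (1 : ℂ))).det ≠ 0 := by
  have hM : (P7.submatrix selIdx selIdx).map (eval fun _ => (1 : ℂ)) =
      !![0, 1, 1, 0, -1, 0;
         -1, 0, 1, 0, -2, -1;
         -1, -1, 0, 0, -3, -1;
         0, 0, 0, 0, -5, -2;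
         1, 2, 3, 5, 0, 0;
         0, 1, 1, 2, 0, 0] := by
    ext i j
    rw [Matrix.map_apply, Matrix.submatrix_apply]
    fin_cases i <;> fin_cases j <;>
      norm_num [Matrix.map_apply, Matrix.submatrix_apply, P7, map_sub, eval_strD5P, selIdx,
        show ((4 : Fin 7) : ℕ) = 4 from rfl, show ((5 : Fin 7) : ℕ) = 5 from rfl,
        show ((6 : Fin 7) : ℕ) = 6 from rfl]
  rw [hM]
  intro h0
  have hMN : (!![0, 1, 1, 0, -1, 0;
         -1, 0, 1, 0, -2, -1;
         -1, -1, 0, 0, -3, -1;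
         0, 0, 0, 0, -5, -2;
         1, 2, 3, 5, 0, 0;
         0, 1, 1, 2, 0, 0] : Matrix (Fin 6) (Fin 6) ℂ) *
      !![0, -4, -4, 4, 8, -20;
         4, 0, -8, 4, -8, 20;
         4, 8, 0, -4, 8, -20;
         -4, -4, 4, 0, 0, 8;
         -8, 8, -8, 0, 0, 0;
         20, -20, 20, -8, 0, 0] = (16 : ℂ) • 1 := by
    ext i j
    fin_cases i <;> fin_cases j <;>
      norm_num [Matrix.mul_apply, Fin.sum_univ_succ, Matrix.one_apply, Fin.ext_iff]
  have h2 := congrArg Matrix.det hMN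
  rw [Matrix.det_mul, h0, zero_mul, Matrix.det_smul, Matrix.det_one, Fintype.card_fin] at h2
  norm_num at h2

lemma d5_det_sub_ne_zero : (P7.submatrix selIdx selIdx).det ≠ 0 := by
  intro h
  apply d5_eval_det_ne_zero
  rw [← RingHom.mapMatrix_apply, ← RingHom.map_det, h, map_zero]

lemma AD5_eq : AD5 = P7.map (algebraMap (MvPolynomial (Fin 5) ℂ) _) := rfl

lemma d5_det_AD5_sub_ne_zero : (AD5.submatrix selIdx selIdx).det ≠ 0 := by
  rw [AD5_eq, Matrix.submatrix_map, ← RingHom.mapMatrix_apply, ← RingHom.map_det]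
  intro h
  exact d5_det_sub_ne_zero <| (map_eq_zero_iff _
    (IsFractionRing.injective (MvPolynomial (Fin 5) ℂ) _)).mp h

/-- Row selector matrix. -/
noncomputable def Esel : Matrix (Fin 6) (Fin 7) (FractionRing (MvPolynomial (Fin 5) ℂ)) :=
  fun i j => if j = selIdx i then 1 else 0

lemma d5_rank_ge : 6 ≤ AD5.rank := by
  classical
  have hprod : Esel * AD5 * Eselᵀ = AD5.submatrix selIdx selIdx := by
    ext i j
    simp [Esel, Matrix.mul_apply, Matrix.transpose_apply]
  have hunit : IsUnit (AD5.submatrix selIdx selIdx) :=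
    (Matrix.isUnit_iff_isUnit_det _).mpr (Ne.isUnit d5_det_AD5_sub_ne_zero)
  have h6 : (AD5.submatrix selIdx selIdx).rank = 6 := by
    rw [Matrix.rank_of_isUnit _ hunit, Fintype.card_fin]
  calc (6 : ℕ) = (Esel * AD5 * Eselᵀ).rank := by rw [hprod, h6]
    _ ≤ (Esel * AD5).rank := Matrix.rank_mul_le_left _ _
    _ ≤ AD5.rank := Matrix.rank_mul_le_right _ _

/-- An explicit kernel vector (polynomial entries). -/
noncomputable def pker : Fin 7 → MvPolynomial (Fin 5) ℂ :=
  ![-3 * X 3 * X 4 ^ 2,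
    3 * X 3 ^ 2 * X 4,
    -3 * X 2 * X 3 * X 4,
    X 4 * (X 1 * X 3 + X 2 ^ 2 + 2 * X 0 * X 4),
    X 3 * (X 2 ^ 2 - 2 * X 1 * X 3 - X 0 * X 4),
    0, 0]

noncomputable def vker : Fin 7 → FractionRing (MvPolynomial (Fin 5) ℂ) :=
  fun i => algebraMap (MvPolynomial (Fin 5) ℂ) _ (pker i)

lemma pker_sum (i : Fin 7) : ∑ j, P7 i j * pker j = 0 := by
  fin_cases i <;>
    (simp only [P7, pker, strD5P, Fin.sum_univ_succ, Finset.univ_unique,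
      Finset.sum_singleton, Fin.val_succ, Fin.val_zero, Fin.val_eq_zero,
      Matrix.cons_val_zero, Matrix.cons_val_one, Matrix.head_cons,
      Matrix.cons_val_succ]
     norm_num [_root_.map_ofNat]
     try ring)

lemma AD5_mulVec_vker : AD5.mulVec vker = 0 := by
  funext i
  have : AD5.mulVec vker i =
      algebraMap (MvPolynomial (Fin 5) ℂ) _ (∑ j, P7 i j * pker j) := by
    simp [Matrix.mulVec, dotProduct, vker, AD5_eq, _root_.map_sum,
      _root_.map_mul, Matrix.map_apply]
  rw [this, pker_sum, _root_.map_zero]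
  rfl

lemma vker_ne_zero : vker ≠ 0 := by
  intro h
  have h1 : vker 1 = 0 := by rw [h]; rfl
  have hp : (pker 1 : MvPolynomial (Fin 5) ℂ) = 0 :=
    (map_eq_zero_iff _ (IsFractionRing.injective (MvPolynomial (Fin 5) ℂ) _)).mp h1
  have := congrArg (eval fun _ : Fin 5 => (1 : ℂ)) hp
  simp [pker] at this

lemma d5_rank_le : AD5.rank ≤ 6 := by
  classical
  have hker : LinearMap.ker AD5.mulVecLin ≠ ⊥ := by
    intro h
    exact vker_ne_zero <| (LinearMap.ker_eq_bot.mp h) (by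
      rw [Matrix.mulVecLin_apply, AD5_mulVec_vker, _root_.map_zero])
  have hrn : AD5.rank +
      Module.finrank (FractionRing (MvPolynomial (Fin 5) ℂ))
        (LinearMap.ker AD5.mulVecLin) = 7 := by
    have := LinearMap.finrank_range_add_finrank_ker AD5.mulVecLin
    rwa [Module.finrank_pi, Fintype.card_fin] at this
  have hpos : Module.finrank (FractionRing (MvPolynomial (Fin 5) ℂ))
      (LinearMap.ker AD5.mulVecLin) ≠ 0 := by
    intro h
    exact hker (Submodule.finrank_eq_zero.mp h)
  omega

/-- The structure-constant matrix of `d_5'` has generic rank 6 over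
`ℂ(x_0,…,x_3,y_1)`; hence `N(d_5') = 7 − 6 = 1`. -/
theorem rank_d5' : AD5.rank = 6 ∧ 7 - AD5.rank = 1 := by
  have h := le_antisymm d5_rank_le d5_rank_ge
  exact ⟨h, by omega⟩
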